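/- Let E = (0 → M →^f M_{n-1} → ⋯ → M₁ →^{∂₁} L →^π g → 0) be a crossed n-fold extension of a Lie algebra g by a g-module M, with n ≥ 3. Suppose there exists a g-module morphism gmap : M_{n-1} → M with gmap ∘ f = id_M. Then the tuple of maps (id_M, gmap, 0, …, 0, π) defines a morphism of crossed n-fold extensions from E to the zero extension 0 → M = M → 0 → ⋯ → 0 → g = g → 0; in particular all required squares commute and (0, π) : (M₁, L, ∂₁) → (0, g, 0) is a morphism of crossed modules. -/

import Mathlib

/-! Crossed `n`-fold extensions of a Lie algebra `g` by a `g`-module `M`, for `n = t + 2`.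

The underlying data of a crossed `n`-fold extension
`0 → M → M_{n-1} → ⋯ → M₁ → L → g → 0` is recorded as follows: `L` is the Lie algebra,
`V = M₁` is the `L`-module of the crossed module `(M₁, L, ∂₁)`, and `Mod i` for
`0 ≤ i ≤ t - 1` are the `g`-modules `M_{i+2}`, so that `Mod (t-1) = M_{n-1}`
(the family `Mod` is indexed by all of `ℕ`; indices `≥ t` are junk).  For uniformity the
module `M` itself is glued onto the top of the chain via a linear equivalence
`e : M ≃ₗ Mod t`, so that the map `f : M → M_{n-1}` of the extension is the composite of
`e` with the connecting map out of `Mod t` (`d (t-1)` if `t ≥ 1`, and `d2` if `t = 0`). -/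

/-- The data of a crossed `(t+2)`-fold extension of `g` by `M`. -/
structure LieCrossedExtData (K : Type) [Field K] (g : Type) [LieRing g] [LieAlgebra K g]
    (M : Type) [AddCommGroup M] [Module K M] [LieRingModule g M] [LieModule K g M]
    (t : ℕ) : Type 1 where
  L : Type
  [instLieRingL : LieRing L]
  [instLieAlgebraL : LieAlgebra K L]
  V : Type
  [instAddCommGroupV : AddCommGroup V]
  [instModuleV : Module K V]
  [instLieRingModuleV : LieRingModule L V]
  [instLieModuleV : LieModule K L V]
  Mod : ℕ → Type
  [instAddCommGroupMod : ∀ i, AddCommGroup (Mod i)]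
  [instModuleMod : ∀ i, Module K (Mod i)]
  [instLieRingModuleMod : ∀ i, LieRingModule g (Mod i)]
  [instLieModuleMod : ∀ i, LieModule K g (Mod i)]
  π : L →ₗ⁅K⁆ g
  d1 : V →ₗ[K] L
  d2 : Mod 0 →ₗ[K] V
  d : ∀ i : ℕ, Mod (i + 1) →ₗ[K] Mod i
  e : M ≃ₗ[K] Mod t

attribute [instance] LieCrossedExtData.instLieRingL LieCrossedExtData.instLieAlgebraL
  LieCrossedExtData.instAddCommGroupV LieCrossedExtData.instModuleV
  LieCrossedExtData.instLieRingModuleV LieCrossedExtData.instLieModuleV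
  LieCrossedExtData.instAddCommGroupMod LieCrossedExtData.instModuleMod
  LieCrossedExtData.instLieRingModuleMod LieCrossedExtData.instLieModuleMod

variable {K : Type} [Field K] {g : Type} [LieRing g] [LieAlgebra K g]
  {M : Type} [AddCommGroup M] [Module K M] [LieRingModule g M] [LieModule K g M]

/-- The axioms making such data a crossed `(t+2)`-fold extension of `g` by `M`:
`(V, L, ∂₁)` is a crossed module with cokernel `g`, the sequence is exact, all the maps
between `g`-modules are morphisms of `g`-modules (for `∂₂` this is expressed using lifts
along `π`), and the top map (which corresponds to `f : M → M_{n-1}`) is injective. -/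
def IsLieCrossedExt {t : ℕ} (E : LieCrossedExtData K g M t) : Prop :=
  -- (V, L, d1) is a crossed module: d1 is L-equivariant and ⁅∂v, w⁆ = -⁅∂w, v⁆
  (∀ (x : E.L) (v : E.V), E.d1 ⁅x, v⁆ = ⁅x, E.d1 v⁆) ∧
  (∀ v w : E.V, ⁅E.d1 v, w⁆ = - ⁅E.d1 w, v⁆) ∧
  -- π is onto and exactness holds at L
  Function.Surjective E.π ∧
  (∀ x : E.L, E.π x = 0 ↔ x ∈ LinearMap.range E.d1) ∧
  -- exactness at V = M₁
  (LinearMap.ker E.d1 = LinearMap.range E.d2) ∧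
  -- exactness at the modules M₂, …, M_{n-1}
  (1 ≤ t → LinearMap.ker E.d2 = LinearMap.range (E.d 0)) ∧
  (∀ j, j + 1 < t → LinearMap.ker (E.d j) = LinearMap.range (E.d (j + 1))) ∧
  -- injectivity of f : M → M_{n-1} (the map out of the copy of M on top)
  (t = 0 → Function.Injective E.d2) ∧
  (∀ k, k + 1 = t → Function.Injective (E.d k)) ∧
  -- d2, the d i and e are morphisms of g-modules
  (∀ (x : E.L) (m : E.Mod 0), E.d2 ⁅E.π x, m⁆ = ⁅x, E.d2 m⁆) ∧
  (∀ j, j < t → ∀ (x : g) (m : E.Mod (j + 1)), E.d j ⁅x, m⁆ = ⁅x, E.d j m⁆) ∧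
  (∀ (x : g) (m : M), E.e ⁅x, m⁆ = ⁅x, E.e m⁆)

/-- A morphism of crossed `(t+2)`-fold extensions inducing the identity on `g` and `M`:
the maps `β : L → L'` (a Lie algebra morphism), `δV = δ₁ : M₁ → M₁'` and
`δMod i : M_{i+2} → M_{i+2}'` make all squares commute, `(δ₁, β)` is a morphism of crossed
modules over the identity of `g`, and the `δMod i` are morphisms of `g`-modules. -/
def IsLieCrossedExtHom {t : ℕ} (E F : LieCrossedExtData K g M t)
    (β : E.L →ₗ⁅K⁆ F.L) (δV : E.V →ₗ[K] F.V)
    (δMod : ∀ i : ℕ, E.Mod i →ₗ[K] F.Mod i) : Prop :=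
  -- identity on g
  (∀ x : E.L, F.π (β x) = E.π x) ∧
  -- (δV, β) is a morphism of crossed modules
  (∀ v : E.V, F.d1 (δV v) = β (E.d1 v)) ∧
  (∀ (x : E.L) (v : E.V), δV ⁅x, v⁆ = ⁅β x, δV v⁆) ∧
  -- all the squares commute
  (∀ m : E.Mod 0, δV (E.d2 m) = F.d2 (δMod 0 m)) ∧
  (∀ j, j < t → ∀ m : E.Mod (j + 1), δMod j (E.d j m) = F.d j (δMod (j + 1) m)) ∧
  -- the δMod j are morphisms of g-modules
  (∀ j, j ≤ t → ∀ (x : g) (m : E.Mod j), δMod j ⁅x, m⁆ = ⁅x, δMod j m⁆) ∧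
  -- identity on M
  (∀ m : M, δMod t (E.e m) = F.e m)

section ZeroExtension

variable (K g M)

/-- The submodules of `M` used to build the zero extension: the quotient `M ⧸ zeroSub i`
is `M` at the top two spots of the chain and `0` below them. -/
def zeroSub (t i : ℕ) : LieSubmodule K g M := if t ≤ i + 1 then ⊥ else ⊤

theorem zeroSub_antitone (t i : ℕ) : zeroSub K g M t (i + 1) ≤ zeroSub K g M t i := by
  unfold zeroSub
  split_ifs with h1 h2
  · exact bot_le
  · exact bot_le
  · omega
  · exact le_rfl

/-- The zero crossed `(t+2)`-fold extension
`0 → M = M → 0 → ⋯ → 0 → g = g → 0` of `g` by `M`. -/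
def zeroExtData (t : ℕ) : LieCrossedExtData K g M t where
  L := g
  V := M ⧸ (⊤ : LieSubmodule K g M)
  Mod i := M ⧸ zeroSub K g M t i
  π := LieHom.id
  d1 := 0
  d2 := 0
  d i := Submodule.mapQ (zeroSub K g M t (i + 1)).toSubmodule
    (zeroSub K g M t i).toSubmodule LinearMap.id
    (fun x hx => zeroSub_antitone K g M t i hx)
  e := (Submodule.quotEquivOfEqBot (zeroSub K g M t t).toSubmodule
    (by simp [zeroSub])).symm

end ZeroExtension

set_option maxHeartbeats 2000000 in
/-- let `E` be a crossed `n`-fold extension of `g` by `M` (`n = u + 3 ≥ 3`)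
and suppose there is a morphism of `g`-modules `gmap : M_{n-1} → M` with `gmap ∘ f = id`.
Then `(id_M, gmap, 0, …, 0, π)` is a morphism of crossed `n`-fold extensions from `E` to
the zero extension `0 → M = M → 0 → ⋯ → 0 → g = g → 0`; in particular all the squares
commute and `(0, π)` is a morphism of crossed modules. -/
theorem crossed_ext_stmt13 (u : ℕ) (E : LieCrossedExtData K g M (u + 1))
    (hE : IsLieCrossedExt E)
    -- the g-module retraction gmap of f (here f = (d u) ∘ e : M → M_{n-1} = Mod u)
    (gmap : E.Mod u →ₗ[K] M)
    (hgmap : ∀ (x : g) (m : E.Mod u), gmap ⁅x, m⁆ = ⁅x, gmap m⁆)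
    (hretract : ∀ m : M, gmap (E.d u (E.e m)) = m) :
    ∃ δMod : ∀ i : ℕ, E.Mod i →ₗ[K] (zeroExtData K g M (u + 1)).Mod i,
      -- δMod is zero below the top and is (the quotient copy of) gmap at the top,
      (∀ j, j < u → ∀ m : E.Mod j, δMod j m = 0) ∧
      (∀ m : E.Mod u, δMod u m = Submodule.Quotient.mk (gmap m)) ∧
      -- and together with β = π : L → g and δ₁ = 0 : M₁ → 0 it is a morphism of crossed
      -- (u+3)-fold extensions from E to the zero extension, inducing the identity on g, M.
      IsLieCrossedExtHom E (zeroExtData K g M (u + 1)) E.π 0 δMod := by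
  -- subsingleton instances for the zero parts of the target extension
  have hsub : ∀ j, j < u → Subsingleton ((zeroExtData K g M (u + 1)).Mod j) := by
    intro j hj
    have : zeroSub K g M (u + 1) j = ⊤ := by simp [zeroSub]; omega
    exact (Submodule.Quotient.subsingleton_iff).mpr (by rw [this]; rfl)
  have hV : Subsingleton ((zeroExtData K g M (u + 1)).V) :=
    (Submodule.Quotient.subsingleton_iff).mpr rfl
  -- the top-level maps
  set fu : E.Mod u →ₗ[K] (zeroExtData K g M (u + 1)).Mod u :=
    (zeroSub K g M (u + 1) u).toSubmodule.mkQ ∘ₗ gmap with hfu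
  set ftop : E.Mod (u + 1) →ₗ[K] (zeroExtData K g M (u + 1)).Mod (u + 1) :=
    (zeroSub K g M (u + 1) (u + 1)).toSubmodule.mkQ ∘ₗ (gmap ∘ₗ E.d u) with hftop
  refine ⟨fun i =>
    if h1 : i = u then h1.symm ▸ fu
    else if h2 : i = u + 1 then h2.symm ▸ ftop
    else 0, ?_, ?_, ?_⟩
  · intro j hj m
    have := hsub j hj
    exact Subsingleton.elim _ _
  · intro m
    simp only [dif_pos rfl]
    rfl
  · obtain ⟨hcm1, hcm2, hsurj, hexL, hexV, hex0, hexj, hinj0, hinjk, hd2, hdj, he⟩ := hE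
    refine ⟨fun x => rfl, ?_, ?_, ?_, ?_, ?_, ?_⟩
    · intro v
      have h1 : (zeroExtData K g M (u + 1)).d1 = 0 := rfl
      have h2 : E.π (E.d1 v) = 0 := (hexL (E.d1 v)).mpr ⟨v, rfl⟩
      simp only [h1, LinearMap.zero_comp, LinearMap.zero_apply]
      exact h2.symm
    · intro x v
      exact Subsingleton.elim _ _
    · intro m
      exact Subsingleton.elim _ _
    · intro j hj m
      rcases Nat.lt_or_ge j u with h | h
      · have := hsub j h
        exact Subsingleton.elim _ _
      · have hju : u = j := by omega
        subst hju
        simp only [dif_pos rfl, dif_neg (by omega : ¬ u + 1 = u)]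
        exact (Submodule.mapQ_apply (zeroSub K g M (u + 1) (u + 1)).toSubmodule
          (zeroSub K g M (u + 1) u).toSubmodule LinearMap.id
          (h := fun x hx => zeroSub_antitone K g M (u + 1) u hx) (gmap (E.d u m))).symm
    · intro j hj x m
      rcases Nat.lt_or_ge j u with h | h
      · have := hsub j h
        exact Subsingleton.elim _ _
      · rcases Nat.lt_or_ge j (u + 1) with h' | h'
        · have hju : u = j := by omega
          subst hju
          simp only [dif_pos rfl]
          show (LieSubmodule.Quotient.mk' (zeroSub K g M (u + 1) u)) (gmap ⁅x, m⁆) =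
            ⁅x, (LieSubmodule.Quotient.mk' (zeroSub K g M (u + 1) u)) (gmap m)⁆
          rw [hgmap]
          exact (LieSubmodule.Quotient.mk' _).map_lie x (gmap m)
        · have hju : u + 1 = j := by omega
          subst hju
          simp only [dif_neg (by omega : ¬ u + 1 = u), dif_pos rfl]
          show (LieSubmodule.Quotient.mk' (zeroSub K g M (u + 1) (u + 1))) (gmap (E.d u ⁅x, m⁆)) =
            ⁅x, (LieSubmodule.Quotient.mk' (zeroSub K g M (u + 1) (u + 1))) (gmap (E.d u m))⁆
          rw [hdj u (by omega) x m, hgmap]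
          exact (LieSubmodule.Quotient.mk' _).map_lie x (gmap (E.d u m))
    · intro m
      simp only [dif_neg (by omega : ¬ u + 1 = u), dif_pos rfl]
      show Submodule.Quotient.mk (gmap (E.d u (E.e m))) = (zeroExtData K g M (u + 1)).e m
      rw [hretract]
      rfl
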